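/- Let q be a prime power, h, k, n, m positive integers with p = char(F_q) ≥ h, and let α₁, …, α_n ∈ F_{q^h} generate F_{q^h} over F_q and lie in pairwise distinct q-Frobenius orbits, and let t₁, …, t_m ∈ F_q be pairwise distinct. Fix a normal element ω of F_{q^h} over F_q. Define the code C ⊆ F_{q^h}^{n+m+1} as the set of vectors ( f(α₁), …, f(α_n), Σ_{i=0}^{h−1} f^{(i)}(t₁) ω^{q^i}, …, Σ_{i=0}^{h−1} f^{(i)}(t_m) ω^{q^i}, Σ_{i=0}^{h−1} f_{hk−h+i} ω^{q^i} ) for f = Σ_j f_j X^j ∈ F_q[X] with deg f < hk. Then C is an F_q-linear MDS code: |C| = q^{hk} and every nonzero codeword has Hamming weight at least n + m + 1 − (k − 1) = n + m − k + 2. -/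

import Mathlib

open Polynomial

/-- The `q^s`-power map as an `Fq`-algebra endomorphism of `K`. -/
private lemma aux_pow_algHom (Fq K : Type) [Field Fq] [Fintype Fq] [Field K]
    [Algebra Fq K] (s : ℕ) :
    ∃ φ : K →ₐ[Fq] K, ∀ x : K, φ x = x ^ (Fintype.card Fq) ^ s := by
  set p := ringChar Fq with hpdef
  haveI : CharP Fq p := ringChar.charP Fq
  have hpp : Fact p.Prime := ⟨CharP.char_is_prime Fq p⟩
  obtain ⟨e, -, hcard⟩ := FiniteField.card Fq p
  haveI : CharP K p := charP_of_injective_algebraMap (algebraMap Fq K).injective p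
  haveI : ExpChar K p := ExpChar.prime hpp.out
  refine ⟨{ toRingHom := iterateFrobenius K p (e * s), commutes' := ?_ }, ?_⟩
  · intro c
    show iterateFrobenius K p (e * s) (algebraMap Fq K c) = algebraMap Fq K c
    rw [iterateFrobenius_def, ← map_pow, pow_mul, ← hcard, FiniteField.pow_card_pow]
  · intro x
    show iterateFrobenius K p (e * s) x = _
    rw [iterateFrobenius_def, hcard, ← pow_mul]

/-- Frobenius conjugates of a root of a polynomial over `Fq` are again roots. -/
private lemma aux_conj_root (Fq K : Type) [Field Fq] [Fintype Fq] [Field K]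
    [Algebra Fq K] (M : Polynomial Fq) (β : K) (hroot : Polynomial.aeval β M = 0)
    (s : ℕ) : Polynomial.aeval (β ^ (Fintype.card Fq) ^ s) M = 0 := by
  obtain ⟨φ, hφ⟩ := aux_pow_algHom Fq K s
  rw [← hφ, aeval_algHom_apply, hroot, map_zero]

/-- The `h` Frobenius conjugates of a generator are pairwise distinct. -/
private lemma aux_conj_inj (Fq K : Type) [Field Fq] [Fintype Fq] [Field K] [Fintype K]
    [Algebra Fq K] (h : ℕ) (hh : 0 < h) (hrank : Module.finrank Fq K = h)
    (β : K) (hβ : IntermediateField.adjoin Fq {β} = ⊤) :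
    ∀ s s' : ℕ, s < h → s' < h →
      β ^ (Fintype.card Fq) ^ s = β ^ (Fintype.card Fq) ^ s' → s = s' := by
  haveI : FiniteDimensional Fq K := FiniteDimensional.of_finrank_pos (hrank ▸ hh)
  have key : ∀ s s' : ℕ, s < s' → s' < h →
      β ^ (Fintype.card Fq) ^ s ≠ β ^ (Fintype.card Fq) ^ s' := by
    intro s s' hss hs'h heq
    set q := Fintype.card Fq with hq
    have hq1 : 1 < q := Fintype.one_lt_card
    set d := s' - s with hd
    have hd0 : 0 < d := Nat.sub_pos_of_lt hss
    have hdh : d < h := lt_of_le_of_lt (Nat.sub_le _ _) hs'h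
    -- From the equality, deduce β ^ q ^ d = β using injectivity of x ↦ x ^ q ^ s.
    obtain ⟨φs, hφs⟩ := aux_pow_algHom Fq K s
    have hβd : β ^ q ^ d = β := by
      have h1 : φs (β ^ q ^ d) = φs β := by
        rw [hφs, hφs, ← pow_mul, ← pow_add, ← hq]
        rw [hd, Nat.sub_add_cancel hss.le]
        exact heq.symm
      exact φs.toRingHom.injective h1
    -- Every element of K then satisfies x ^ q ^ d = x.
    obtain ⟨φ, hφ⟩ := aux_pow_algHom Fq K d
    have hint : IsIntegral Fq β := Algebra.IsIntegral.isIntegral β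
    have hadj : Algebra.adjoin Fq {β} = ⊤ := by
      rw [← IntermediateField.adjoin_simple_toSubalgebra_of_isAlgebraic hint.isAlgebraic, hβ]
      rfl
    have htop : AlgHom.equalizer φ (AlgHom.id Fq K) = ⊤ := by
      rw [eq_top_iff, ← hadj, Algebra.adjoin_le_iff]
      intro x hx
      rw [Set.mem_singleton_iff] at hx
      rw [SetLike.mem_coe, AlgHom.mem_equalizer, hx, hφ]
      exact hβd
    have hfix : ∀ x : K, x ^ q ^ d = x := by
      intro x
      have hx : x ∈ AlgHom.equalizer φ (AlgHom.id Fq K) := htop ▸ trivial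
      rw [AlgHom.mem_equalizer, hφ] at hx
      exact hx
    -- Count: all q^h elements of K are roots of X^(q^d) - X.
    classical
    set P : K[X] := X ^ q ^ d - X with hP
    have hdegX : (X : K[X]).degree < (X ^ q ^ d : K[X]).degree := by
      rw [degree_X, degree_X_pow]
      exact_mod_cast (Nat.one_lt_pow hd0.ne' hq1 : 1 < q ^ d)
    have hPdeg : P.degree = ((q ^ d : ℕ) : WithBot ℕ) := by
      rw [hP, degree_sub_eq_left_of_degree_lt hdegX, degree_X_pow]
    have hP0 : P ≠ 0 := by
      intro h0
      rw [h0, degree_zero] at hPdeg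
      exact (WithBot.bot_ne_coe (a := (q ^ d : ℕ))) (by exact_mod_cast hPdeg)
    have hPnat : P.natDegree = q ^ d := natDegree_eq_of_degree_eq_some hPdeg
    have hsub : (Finset.univ : Finset K) ⊆ P.roots.toFinset := by
      intro x _
      rw [Multiset.mem_toFinset, mem_roots hP0]
      simp [hP, IsRoot, hfix x]
    have hle : Fintype.card K ≤ q ^ d := by
      calc Fintype.card K = (Finset.univ : Finset K).card := Finset.card_univ.symm
        _ ≤ P.roots.toFinset.card := Finset.card_le_card hsub
        _ ≤ Multiset.card P.roots := Multiset.toFinset_card_le _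
        _ ≤ P.natDegree := P.card_roots'
        _ = q ^ d := hPnat
    have hcardK : Fintype.card K = q ^ h := by
      rw [Module.card_eq_pow_finrank (K := Fq) (V := K), hrank]
    rw [hcardK] at hle
    exact absurd hle (not_le.mpr (Nat.pow_lt_pow_right hq1 hdh))
  intro s s' hs hs' heq
  rcases lt_trichotomy s s' with h1 | h1 | h1
  · exact absurd heq (key s s' h1 hs')
  · exact h1
  · exact absurd heq.symm (key s' s h1 hs)

/-- Any root in `K` of the minimal polynomial of a generator `β` is a Frobenius
conjugate of `β`. -/
private lemma aux_root_is_conj (Fq K : Type) [Field Fq] [Fintype Fq] [Field K]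
    [Fintype K] [DecidableEq K] [Algebra Fq K] (h : ℕ) (hh : 0 < h)
    (hrank : Module.finrank Fq K = h)
    (β : K) (hβ : IntermediateField.adjoin Fq {β} = ⊤)
    (β' : K) (hroot : Polynomial.aeval β' (minpoly Fq β) = 0) :
    ∃ s : ℕ, s < h ∧ β' = β ^ (Fintype.card Fq) ^ s := by
  haveI : FiniteDimensional Fq K := FiniteDimensional.of_finrank_pos (hrank ▸ hh)
  have hint : IsIntegral Fq β := Algebra.IsIntegral.isIntegral β
  have hmindeg : (minpoly Fq β).natDegree = h := by
    rw [← IntermediateField.adjoin.finrank hint]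
    rw [hβ, IntermediateField.finrank_top', hrank]
  set M : K[X] := (minpoly Fq β).map (algebraMap Fq K) with hM
  have hM0 : M ≠ 0 :=
    (Polynomial.map_ne_zero_iff (algebraMap Fq K).injective).mpr (minpoly.ne_zero hint)
  have hMdeg : M.natDegree = h := by
    rw [hM, natDegree_map, hmindeg]
  have haevalM : ∀ x : K, Polynomial.aeval x (minpoly Fq β) = M.eval x := by
    intro x; rw [hM, aeval_def, eval_map]
  set T : Finset K :=
    Finset.image (fun s : Fin h => β ^ (Fintype.card Fq) ^ (s : ℕ)) Finset.univ with hT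
  have hTsub : T ⊆ M.roots.toFinset := by
    intro x hx
    rw [hT, Finset.mem_image] at hx
    obtain ⟨s, -, rfl⟩ := hx
    rw [Multiset.mem_toFinset, mem_roots hM0]
    have := aux_conj_root Fq K (minpoly Fq β) β (minpoly.aeval Fq β) s
    rw [haevalM] at this
    exact this
  have hTcard : T.card = h := by
    rw [hT, Finset.card_image_of_injective _ ?_, Finset.card_univ, Fintype.card_fin]
    intro s s' hss
    exact Fin.ext (aux_conj_inj Fq K h hh hrank β hβ s s' s.isLt s'.isLt hss)
  have hcard_le : M.roots.toFinset.card ≤ h := by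
    calc M.roots.toFinset.card ≤ Multiset.card M.roots := Multiset.toFinset_card_le _
      _ ≤ M.natDegree := M.card_roots'
      _ = h := hMdeg
  have hTeq : M.roots.toFinset = T :=
    (Finset.eq_of_subset_of_card_le hTsub (hTcard ▸ hcard_le)).symm
  have hβ'mem : β' ∈ M.roots.toFinset := by
    rw [Multiset.mem_toFinset, mem_roots hM0]
    show M.eval β' = 0
    rw [← haevalM]
    exact hroot
  rw [hTeq, hT, Finset.mem_image] at hβ'mem
  obtain ⟨s, -, hs⟩ := hβ'mem
  exact ⟨s, s.isLt, hs.symm⟩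

/-- the extended evaluation code S_{h,k,q}(α, t, ∞) (adding the
osculating/derivative coordinates at the t_j and the coordinate at infinity) is an
F_q-linear MDS code: it has q^{hk} codewords and every nonzero codeword has
Hamming weight at least n + m + 2 − k. -/
theorem extended_code_is_MDS
    (Fq K : Type) [Field Fq] [Fintype Fq] [Field K] [Fintype K] [DecidableEq K]
    [Algebra Fq K]
    (p h k n m : ℕ) (hp : p.Prime) (hchar : ringChar Fq = p) (hph : h ≤ p)
    (hh : 2 ≤ h) (hk0 : 0 < k) (hn : 0 < n) (hm : 0 < m) (hkn : k ≤ n)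
    (hrank : Module.finrank Fq K = h)
    (α : Fin n → K)
    (hgen : ∀ r, IntermediateField.adjoin Fq {α r} = ⊤)
    (horb : ∀ r r', r ≠ r' → ∀ s : ℕ, α r ≠ (α r') ^ (Fintype.card Fq) ^ s)
    (t : Fin m → Fq) (ht : Function.Injective t)
    (ω : K)
    (hω : LinearIndependent Fq (fun i : Fin h => ω ^ (Fintype.card Fq) ^ (i : ℕ))) :
    ∀ cw : Polynomial Fq → (Fin n ⊕ Fin m ⊕ Unit → K),
      (cw = fun f x =>
        (match x with
        | Sum.inl r => Polynomial.aeval (α r) f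
        | Sum.inr (Sum.inl jj) =>
            ∑ i ∈ Finset.range h,
              algebraMap Fq K
                  (Polynomial.eval (t jj) ((⇑Polynomial.derivative)^[i] f)) *
                ω ^ (Fintype.card Fq) ^ i
        | Sum.inr (Sum.inr _) =>
            ∑ i ∈ Finset.range h,
              algebraMap Fq K (f.coeff (h * k - h + i)) *
                ω ^ (Fintype.card Fq) ^ i : K)) →
      Nat.card ↥(cw '' (Polynomial.degreeLT Fq (h * k) : Set (Polynomial Fq)))
          = (Fintype.card Fq) ^ (h * k) ∧
      ∀ f ∈ Polynomial.degreeLT Fq (h * k), f ≠ 0 →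
        n + m + 2 - k ≤ hammingNorm (cw f) := by
  classical
  intro cw hcw
  subst hcw
  set q := Fintype.card Fq with hqdef
  haveI : CharP Fq p := hchar ▸ ringChar.charP Fq
  have hh0 : 0 < h := lt_of_lt_of_le two_pos hh
  -- extraction from linear independence of the ω-powers
  have homega : ∀ c : ℕ → Fq,
      (∑ i ∈ Finset.range h, algebraMap Fq K (c i) * ω ^ q ^ i) = 0 →
      ∀ i, i < h → c i = 0 := by
    intro c hsum i hi
    have hsum' : ∑ i : Fin h, c i • ω ^ q ^ (i : ℕ) = 0 := by
      rw [← Fin.sum_univ_eq_sum_range (fun i => algebraMap Fq K (c i) * ω ^ q ^ i) h] at hsum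
      simpa [Algebra.smul_def] using hsum
    have := Fintype.linearIndependent_iff.mp hω (fun i : Fin h => c i) hsum' ⟨i, hi⟩
    exact this
  -- The key weight bound.
  have key : ∀ f ∈ Polynomial.degreeLT Fq (h * k), f ≠ 0 →
      n + m + 2 - k ≤ hammingNorm (fun x : Fin n ⊕ Fin m ⊕ Unit =>
        (match x with
        | Sum.inl r => Polynomial.aeval (α r) f
        | Sum.inr (Sum.inl jj) =>
            ∑ i ∈ Finset.range h,
              algebraMap Fq K
                  (Polynomial.eval (t jj) ((⇑Polynomial.derivative)^[i] f)) *
                ω ^ q ^ i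
        | Sum.inr (Sum.inr _) =>
            ∑ i ∈ Finset.range h,
              algebraMap Fq K (f.coeff (h * k - h + i)) * ω ^ q ^ i : K)) := by
    intro f hf hf0
    set cwf : Fin n ⊕ Fin m ⊕ Unit → K := fun x =>
        (match x with
        | Sum.inl r => Polynomial.aeval (α r) f
        | Sum.inr (Sum.inl jj) =>
            ∑ i ∈ Finset.range h,
              algebraMap Fq K
                  (Polynomial.eval (t jj) ((⇑Polynomial.derivative)^[i] f)) *
                ω ^ q ^ i
        | Sum.inr (Sum.inr _) =>
            ∑ i ∈ Finset.range h,
              algebraMap Fq K (f.coeff (h * k - h + i)) * ω ^ q ^ i : K) with hcwf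
    by_contra hlt
    push_neg at hlt
    -- the zero set of the codeword
    set D : Finset (Fin n ⊕ Fin m ⊕ Unit) :=
      Finset.univ.filter (fun x => cwf x = 0) with hD
    have hDnorm : D.card + hammingNorm cwf = n + m + 1 := by
      have h1 := Finset.card_filter_add_card_filter_not
        (s := (Finset.univ : Finset (Fin n ⊕ Fin m ⊕ Unit))) (fun x => cwf x = 0)
      have h2 : (Finset.univ : Finset (Fin n ⊕ Fin m ⊕ Unit)).card = n + m + 1 := by
        simp; omega
      rw [h2] at h1
      rw [← h1, hD]
      congr 1
    have hkD : k ≤ D.card := by omega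
    -- the zero set away from infinity
    set ι : Fin n ⊕ Fin m → Fin n ⊕ Fin m ⊕ Unit :=
      Sum.map id Sum.inl with hι
    have hιinj : Function.Injective ι :=
      Function.Injective.sumMap Function.injective_id Sum.inl_injective
    set Z : Finset (Fin n ⊕ Fin m) :=
      Finset.univ.filter (fun y => cwf (ι y) = 0) with hZ
    have hDsub : D ⊆ Z.image ι ∪ {Sum.inr (Sum.inr ())} := by
      intro x hx
      rw [hD, Finset.mem_filter] at hx
      rcases x with r | j | u
      · refine Finset.mem_union_left _ ?_
        exact Finset.mem_image.mpr ⟨Sum.inl r, by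
          rw [hZ, Finset.mem_filter]; exact ⟨Finset.mem_univ _, hx.2⟩, rfl⟩
      · refine Finset.mem_union_left _ ?_
        exact Finset.mem_image.mpr ⟨Sum.inr j, by
          rw [hZ, Finset.mem_filter]; exact ⟨Finset.mem_univ _, hx.2⟩, rfl⟩
      · exact Finset.mem_union_right _ (by simp)
    have hDZ1 : D.card ≤ Z.card + 1 := by
      calc D.card ≤ (Z.image ι ∪ {Sum.inr (Sum.inr ())}).card :=
            Finset.card_le_card hDsub
        _ ≤ (Z.image ι).card + 1 := by
            refine le_trans (Finset.card_union_le _ _) ?_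
            simp
        _ ≤ Z.card + 1 := by
            exact Nat.add_le_add_right (Finset.card_image_le) 1
    -- the divisor family
    set F : Fin n ⊕ Fin m → Polynomial Fq :=
      Sum.elim (fun r => minpoly Fq (α r)) (fun j => (X - C (t j)) ^ h) with hF
    haveI : FiniteDimensional Fq K := FiniteDimensional.of_finrank_pos (hrank ▸ hh0)
    have hint : ∀ r, IsIntegral Fq (α r) := fun r => Algebra.IsIntegral.isIntegral _
    have hmindeg : ∀ r, (minpoly Fq (α r)).natDegree = h := by
      intro r
      rw [← IntermediateField.adjoin.finrank (hint r), hgen r,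
        IntermediateField.finrank_top', hrank]
    have hFdeg : ∀ y, (F y).natDegree = h := by
      intro y
      rcases y with r | j
      · exact hmindeg r
      · simp [hF, natDegree_pow]
    have hF0 : ∀ y, F y ≠ 0 := by
      intro y
      rcases y with r | j
      · exact minpoly.ne_zero (hint r)
      · exact pow_ne_zero _ (X_sub_C_ne_zero _)
    -- distinct minimal polynomials
    have hmin_ne : ∀ r r', r ≠ r' → minpoly Fq (α r) ≠ minpoly Fq (α r') := by
      intro r r' hrr' heq
      have hroot : Polynomial.aeval (α r) (minpoly Fq (α r')) = 0 := by
        rw [← heq]; exact minpoly.aeval Fq (α r)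
      obtain ⟨s, -, hs⟩ := aux_root_is_conj Fq K h hh0 hrank (α r') (hgen r') (α r) hroot
      exact horb r r' hrr' s hs
    -- pairwise coprimality
    have hirr : ∀ r, Irreducible (minpoly Fq (α r)) := fun r => minpoly.irreducible (hint r)
    have hcop_min : ∀ r r', r ≠ r' →
        IsCoprime (minpoly Fq (α r)) (minpoly Fq (α r')) := by
      intro r r' hrr'
      rw [(hirr r).coprime_iff_not_dvd]
      intro hdvd
      exact hmin_ne r r' hrr'
        (eq_of_monic_of_associated (minpoly.monic (hint r)) (minpoly.monic (hint r'))
          ((hirr r).associated_of_dvd (hirr r') hdvd))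
    have hcop_mixed : ∀ r j, IsCoprime (minpoly Fq (α r)) ((X - C (t j)) ^ h) := by
      intro r j
      refine IsCoprime.pow_right ?_
      rw [(hirr r).coprime_iff_not_dvd]
      intro hdvd
      have h1 : (minpoly Fq (α r)).natDegree ≤ (X - C (t j)).natDegree :=
        natDegree_le_of_dvd hdvd (X_sub_C_ne_zero _)
      rw [hmindeg r, natDegree_X_sub_C] at h1
      omega
    have hcop : Pairwise (Function.onFun IsCoprime F) := by
      intro y y' hyy'
      rcases y with r | j <;> rcases y' with r' | j'
      · exact hcop_min r r' (fun hc => hyy' (by rw [hc]))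
      · exact hcop_mixed r j'
      · exact (hcop_mixed r' j).symm
      · have hjj' : j ≠ j' := fun hc => hyy' (by rw [hc])
        exact IsCoprime.pow (Polynomial.pairwise_coprime_X_sub_C ht hjj')
    -- each F y for y ∈ Z divides f
    have hdvd : ∀ y ∈ Z, F y ∣ f := by
      intro y hy
      rw [hZ, Finset.mem_filter] at hy
      rcases y with r | j
      · have h0 : Polynomial.aeval (α r) f = 0 := hy.2
        exact minpoly.dvd Fq (α r) h0
      · have h0 : (∑ i ∈ Finset.range h,
            algebraMap Fq K (Polynomial.eval (t j) ((⇑derivative)^[i] f)) * ω ^ q ^ i)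
            = 0 := hy.2
        have hev : ∀ i, i < h → Polynomial.eval (t j) ((⇑derivative)^[i] f) = 0 :=
          homega _ h0
        have hlt' : h - 1 < rootMultiplicity (t j) f := by
          refine lt_rootMultiplicity_of_isRoot_iterate_derivative_of_mem_nonZeroDivisors'
            hf0 (fun i hi => hev i (by omega)) ?_
          intro i hi hi0
          refine mem_nonZeroDivisors_of_ne_zero ?_
          intro hc
          rw [CharP.cast_eq_zero_iff Fq p i] at hc
          have := Nat.le_of_dvd (Nat.pos_of_ne_zero hi0) hc
          omega
        have hhle : h ≤ rootMultiplicity (t j) f := by omega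
        calc (X - C (t j)) ^ h ∣ (X - C (t j)) ^ rootMultiplicity (t j) f :=
              pow_dvd_pow _ hhle
          _ ∣ f := pow_rootMultiplicity_dvd f (t j)
    -- the product divides f
    have hproddvd : (∏ y ∈ Z, F y) ∣ f :=
      Finset.prod_dvd_of_coprime (hcop.set_pairwise _) hdvd
    have hprodnd : (∏ y ∈ Z, F y).natDegree = h * Z.card := by
      rw [natDegree_prod _ _ (fun y _ => hF0 y)]
      rw [Finset.sum_congr rfl (fun y _ => hFdeg y), Finset.sum_const, smul_eq_mul,
        mul_comm]
    have hndf : h * Z.card ≤ f.natDegree := by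
      rw [← hprodnd]
      exact natDegree_le_of_dvd hproddvd hf0
    -- degree bound on f
    have hdegf : f.degree < ((h * k : ℕ) : WithBot ℕ) := Polynomial.mem_degreeLT.mp hf
    by_cases hinf : cwf (Sum.inr (Sum.inr ())) = 0
    · -- infinity coordinate vanishes: top h coefficients vanish
      have hcoe : ∀ i, i < h → f.coeff (h * k - h + i) = 0 := by
        have h0 : (∑ i ∈ Finset.range h,
            algebraMap Fq K (f.coeff (h * k - h + i)) * ω ^ q ^ i) = 0 := hinf
        exact homega _ h0
      have hdeg2 : f.degree < ((h * k - h : ℕ) : WithBot ℕ) := by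
        rw [degree_lt_iff_coeff_zero]
        intro j hj
        by_cases hjlt : j < h * k
        · have hj2 : j = h * k - h + (j - (h * k - h)) := by omega
          rw [hj2]
          exact hcoe _ (by omega)
        · exact coeff_eq_zero_of_degree_lt
            (lt_of_lt_of_le hdegf (by exact_mod_cast Nat.le_of_not_lt hjlt))
      have hnd2 : f.natDegree < h * k - h :=
        (natDegree_lt_iff_degree_lt hf0).mpr hdeg2
      -- counting: k - 1 ≤ Z.card
      have hZk : k - 1 ≤ Z.card := by omega
      have : h * (k - 1) ≤ f.natDegree :=
        le_trans (Nat.mul_le_mul_left h hZk) hndf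
      have heq : h * (k - 1) = h * k - h := by
        cases k with
        | zero => omega
        | succ k' => rw [Nat.succ_sub_one, Nat.mul_succ]; omega
      omega
    · -- infinity coordinate nonzero: D avoids infinity
      have hDsub2 : D ⊆ Z.image ι := by
        intro x hx
        have := hDsub hx
        rw [Finset.mem_union] at this
        rcases this with h1 | h1
        · exact h1
        · exfalso
          rw [Finset.mem_singleton] at h1
          subst h1
          rw [hD, Finset.mem_filter] at hx
          exact hinf hx.2
      have hZk : k ≤ Z.card := by
        have := le_trans (Finset.card_le_card hDsub2) Finset.card_image_le
        omega
      have hndf2 : f.natDegree < h * k :=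
        (natDegree_lt_iff_degree_lt hf0).mpr hdegf
      have : h * k ≤ f.natDegree := le_trans (Nat.mul_le_mul_left h hZk) hndf
      omega
  refine ⟨?_, key⟩
  -- cardinality: the evaluation map is injective on degreeLT
  have hpos : 0 < n + m + 2 - k := by omega
  have hinj : Set.InjOn (fun f : Polynomial Fq => (fun x : Fin n ⊕ Fin m ⊕ Unit =>
      (match x with
      | Sum.inl r => Polynomial.aeval (α r) f
      | Sum.inr (Sum.inl jj) =>
          ∑ i ∈ Finset.range h,
            algebraMap Fq K
                (Polynomial.eval (t jj) ((⇑Polynomial.derivative)^[i] f)) *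
              ω ^ q ^ i
      | Sum.inr (Sum.inr _) =>
          ∑ i ∈ Finset.range h,
            algebraMap Fq K (f.coeff (h * k - h + i)) * ω ^ q ^ i : K)))
      (Polynomial.degreeLT Fq (h * k) : Set (Polynomial Fq)) := by
    intro f hfmem g hgmem heq
    by_contra hne
    have hd0 : f - g ≠ 0 := sub_ne_zero_of_ne hne
    have hdmem : f - g ∈ Polynomial.degreeLT Fq (h * k) :=
      Submodule.sub_mem _ hfmem hgmem
    have hzero : (fun x : Fin n ⊕ Fin m ⊕ Unit =>
        (match x with
        | Sum.inl r => Polynomial.aeval (α r) (f - g)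
        | Sum.inr (Sum.inl jj) =>
            ∑ i ∈ Finset.range h,
              algebraMap Fq K
                  (Polynomial.eval (t jj) ((⇑Polynomial.derivative)^[i] (f - g))) *
                ω ^ q ^ i
        | Sum.inr (Sum.inr _) =>
            ∑ i ∈ Finset.range h,
              algebraMap Fq K ((f - g).coeff (h * k - h + i)) * ω ^ q ^ i : K))
        = 0 := by
      funext x
      have hx := congrFun heq x
      rcases x with r | j | u
      · simp only at hx ⊢
        rw [map_sub, hx, sub_self]
        rfl
      · simp only at hx ⊢
        show (∑ i ∈ Finset.range h, _) = (0 : K)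
        have : ∀ i ∈ Finset.range h,
            algebraMap Fq K
                (Polynomial.eval (t j) ((⇑derivative)^[i] (f - g))) * ω ^ q ^ i
            = algebraMap Fq K (Polynomial.eval (t j) ((⇑derivative)^[i] f)) * ω ^ q ^ i
              - algebraMap Fq K (Polynomial.eval (t j) ((⇑derivative)^[i] g)) * ω ^ q ^ i := by
          intro i _
          rw [iterate_derivative_sub, eval_sub, map_sub, sub_mul]
        rw [Finset.sum_congr rfl this, Finset.sum_sub_distrib, hx, sub_self]
      · simp only at hx ⊢
        show (∑ i ∈ Finset.range h, _) = (0 : K)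
        have : ∀ i ∈ Finset.range h,
            algebraMap Fq K ((f - g).coeff (h * k - h + i)) * ω ^ q ^ i
            = algebraMap Fq K (f.coeff (h * k - h + i)) * ω ^ q ^ i
              - algebraMap Fq K (g.coeff (h * k - h + i)) * ω ^ q ^ i := by
          intro i _
          rw [coeff_sub, map_sub, sub_mul]
        rw [Finset.sum_congr rfl this, Finset.sum_sub_distrib, hx, sub_self]
    have hbound := key (f - g) hdmem hd0
    rw [hzero] at hbound
    rw [hammingNorm_zero] at hbound
    omega
  rw [Nat.card_coe_set_eq, Set.ncard_image_of_injOn hinj, ← Nat.card_coe_set_eq]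
  have hcongr : Nat.card (Polynomial.degreeLT Fq (h * k) : Set (Polynomial Fq))
      = Nat.card (Fin (h * k) → Fq) :=
    Nat.card_congr (Polynomial.degreeLTEquiv Fq (h * k)).toEquiv
  rw [hcongr, Nat.card_eq_fintype_card]
  simp [hqdef]
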